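/- Let F be a family of graphs all on p vertices, let F ∈ F be a nonempty graph (having at least one edge) with the minimum number of edges among members of F, and let (H, E) be an instance with prescribed edge set E ⊆ binom(V(H),2). Construct H' from H by adding, for each prescribed edge e = u_e v_e ∈ E, a set X_e of p−2 new vertices and the new hyperedge S_e = X_e ∪ {u_e, v_e}. Then ov_F(H') = ov_F(H; E) + |E|·(|E(F)| − 1), where ov_F(H; E) is the minimum number of edges of a graph overlaying F on H that contains all edges of E. -/

import Mathlib

def Overlays (F : ∀ n, Set (SimpleGraph (Fin n))) {V : Type} [Fintype V] [DecidableEq V]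
    (G : SimpleGraph V) (H : Finset (Finset V)) : Prop :=
  ∀ S ∈ H, ∃ A ∈ F S.card, ∃ e : Fin S.card ≃ {x // x ∈ S},
    ∀ a b, A.Adj a b → G.Adj (e a).1 (e b).1

noncomputable def ovNumber (F : ∀ n, Set (SimpleGraph (Fin n))) {V : Type} [Fintype V]
    [DecidableEq V] (H : Finset (Finset V)) : ℕ∞ :=
  sInf {k : ℕ∞ | ∃ G : SimpleGraph V, Overlays F G H ∧ (G.edgeSet.ncard : ℕ∞) = k}

/-- Overlay number with a prescribed graph `P` whose edges must appear in the solution. -/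
noncomputable def ovNumberPre (F : ∀ n, Set (SimpleGraph (Fin n))) {V : Type} [Fintype V]
    [DecidableEq V] (H : Finset (Finset V)) (P : SimpleGraph V) : ℕ∞ :=
  sInf {k : ℕ∞ | ∃ G : SimpleGraph V, Overlays F G H ∧ P ≤ G ∧ (G.edgeSet.ncard : ℕ∞) = k}

/-! ### Auxiliary material -/

lemma overlays_cast {F : ∀ n, Set (SimpleGraph (Fin n))} {V : Type} [Fintype V] [DecidableEq V]
    (G : SimpleGraph V) (S : Finset V) {n : ℕ} (h : S.card = n)
    (A : SimpleGraph (Fin n)) (hA : A ∈ F n) (e : Fin n ≃ {x // x ∈ S})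
    (he : ∀ a b, A.Adj a b → G.Adj (e a).1 (e b).1) :
    ∃ A ∈ F S.card, ∃ e : Fin S.card ≃ {x // x ∈ S}, ∀ a b, A.Adj a b → G.Adj (e a).1 (e b).1 := by
  subst h
  exact ⟨A, hA, e, he⟩

noncomputable def finsetImageEquiv {α β : Type*} [DecidableEq β] (f : α → β)
    (hf : Function.Injective f) (S : Finset α) : {x // x ∈ S} ≃ {x // x ∈ S.image f} :=
  Equiv.ofBijective (fun x => ⟨f x.1, Finset.mem_image_of_mem f x.2⟩)
    (by
      constructor
      · intro a b hab
        exact Subtype.ext (hf (congrArg Subtype.val hab))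
      · rintro ⟨y, hy⟩
        obtain ⟨x, hx, rfl⟩ := Finset.mem_image.mp hy
        exact ⟨⟨x, hx⟩, rfl⟩)

lemma finsetImageEquiv_apply {α β : Type*} [DecidableEq β] (f : α → β)
    (hf : Function.Injective f) (S : Finset α) (x : {x // x ∈ S}) :
    ((finsetImageEquiv f hf S) x).1 = f x.1 := rfl

lemma finsetImageEquiv_symm_apply {α β : Type*} [DecidableEq β] (f : α → β)
    (hf : Function.Injective f) (S : Finset α) (y : {x // x ∈ S.image f}) :
    f (((finsetImageEquiv f hf S).symm y).1) = y.1 := by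
  conv_rhs => rw [← (finsetImageEquiv f hf S).apply_symm_apply y]
  rfl

lemma ncard_edgeSet_eq {W : Type*} (K : SimpleGraph W) [Fintype K.edgeSet] :
    K.edgeSet.ncard = K.edgeFinset.card := by
  rw [← SimpleGraph.coe_edgeFinset, Set.ncard_coe_finset]

/-- The new hyperedge attached to a prescribed edge `e`. -/
def gadgetSe {V : Type} [Fintype V] [DecidableEq V] (P : SimpleGraph V) [DecidableRel P.Adj]
    (p : ℕ) (e : ↥P.edgeFinset) : Finset (V ⊕ (↥P.edgeFinset × Fin (p - 2))) :=
  ((Finset.univ.filter (fun x => x ∈ (e.1 : Sym2 V))).image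
      (Sum.inl : V → V ⊕ (↥P.edgeFinset × Fin (p - 2)))) ∪
    (Finset.univ.image (fun i : Fin (p - 2) =>
      (Sum.inr (e, i) : V ⊕ (↥P.edgeFinset × Fin (p - 2)))))

/-- The augmented hypergraph. -/
def gadgetH {V : Type} [Fintype V] [DecidableEq V] (P : SimpleGraph V) [DecidableRel P.Adj]
    (p : ℕ) (H : Finset (Finset V)) : Finset (Finset (V ⊕ (↥P.edgeFinset × Fin (p - 2)))) :=
  (H.image (Finset.image (Sum.inl : V → V ⊕ (↥P.edgeFinset × Fin (p - 2))))) ∪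
    P.edgeFinset.attach.image (gadgetSe P p)

lemma gadget_rep {V : Type} [Fintype V] [DecidableEq V] (P : SimpleGraph V)
    [DecidableRel P.Adj] (e : ↥P.edgeFinset) :
    ∃ u v : V, P.Adj u v ∧ (e.1 : Sym2 V) = s(u, v) ∧
      (Finset.univ.filter (fun x => x ∈ (e.1 : Sym2 V))) = {u, v} := by
  obtain ⟨q, hq⟩ := e
  rw [SimpleGraph.mem_edgeFinset] at hq
  revert hq
  induction q using Sym2.ind with
  | _ x y =>
    intro hq
    refine ⟨x, y, (SimpleGraph.mem_edgeSet _).mp hq, rfl, ?_⟩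
    ext z
    simp [Sym2.mem_iff]

section Main

variable {p : ℕ} {V : Type} [Fintype V] [DecidableEq V]

lemma gadget_upper (F : ∀ n, Set (SimpleGraph (Fin n)))
    (F₀ : SimpleGraph (Fin p)) (hF₀ : F₀ ∈ F p) (hF₀ne : F₀ ≠ ⊥)
    (H : Finset (Finset V)) (P : SimpleGraph V) [DecidableRel P.Adj]
    (G : SimpleGraph V) (hG : Overlays F G H) (hPG : P ≤ G) :
    ∃ G' : SimpleGraph (V ⊕ (↥P.edgeFinset × Fin (p - 2))),
      Overlays F G' (gadgetH P p H) ∧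
      G'.edgeSet.ncard ≤ G.edgeSet.ncard + P.edgeSet.ncard * (F₀.edgeSet.ncard - 1) := by
  classical
  -- pick an edge of F₀
  have hne : F₀.edgeSet.Nonempty := SimpleGraph.edgeSet_nonempty.mpr hF₀ne
  obtain ⟨q₀, hq₀⟩ := hne
  have hab : ∃ a b : Fin p, F₀.Adj a b := by
    revert hq₀
    induction q₀ using Sym2.ind with
    | _ a b => exact fun hq => ⟨a, b, (SimpleGraph.mem_edgeSet _).mp hq⟩
  obtain ⟨a₀, b₀, hab⟩ := hab
  have hp : 2 ≤ p := by
    have h1 : (a₀ : ℕ) < p := a₀.2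
    have h2 : (b₀ : ℕ) < p := b₀.2
    have h3 : (a₀ : ℕ) ≠ (b₀ : ℕ) := fun h => hab.ne (Fin.ext h)
    omega
  -- representatives of prescribed edges
  choose u v hPuv huv hfil using fun e => gadget_rep P e
  have hinjr : ∀ e : ↥P.edgeFinset,
      Function.Injective (fun i : Fin (p - 2) =>
        (Sum.inr (e, i) : V ⊕ (↥P.edgeFinset × Fin (p - 2)))) := by
    intro e i j h
    simpa using h
  have cardSe : ∀ e, (gadgetSe P p e).card = p := by
    intro e
    have hdis : Disjoint
        ((Finset.univ.filter (fun x => x ∈ (e.1 : Sym2 V))).image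
          (Sum.inl : V → V ⊕ (↥P.edgeFinset × Fin (p - 2))))
        (Finset.univ.image (fun i : Fin (p - 2) =>
          (Sum.inr (e, i) : V ⊕ (↥P.edgeFinset × Fin (p - 2))))) := by
      rw [Finset.disjoint_left]
      rintro a ha hb
      obtain ⟨x, -, rfl⟩ := Finset.mem_image.mp ha
      obtain ⟨i, -, hi⟩ := Finset.mem_image.mp hb
      exact absurd hi (by simp)
    rw [gadgetSe, Finset.card_union_of_disjoint hdis,
      Finset.card_image_of_injective _ Sum.inl_injective, hfil e,
      Finset.card_image_of_injective _ (hinjr e), Finset.card_univ, Fintype.card_fin]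
    have hcard2 : ({u e, v e} : Finset V).card = 2 := by
      rw [Finset.card_insert_of_notMem (by simp [(hPuv e).ne]), Finset.card_singleton]
    rw [hcard2]
    omega
  have hmemu : ∀ e, (Sum.inl (u e) : V ⊕ (↥P.edgeFinset × Fin (p - 2))) ∈ gadgetSe P p e := by
    intro e
    exact Finset.mem_union_left _ (Finset.mem_image_of_mem _ (by simp [hfil e]))
  have hmemv : ∀ e, (Sum.inl (v e) : V ⊕ (↥P.edgeFinset × Fin (p - 2))) ∈ gadgetSe P p e := by
    intro e
    exact Finset.mem_union_left _ (Finset.mem_image_of_mem _ (by simp [hfil e]))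
  have cardcoe : ∀ e, Fintype.card {x // x ∈ gadgetSe P p e} = p := fun e => by
    rw [Fintype.card_coe]; exact cardSe e
  -- equivalences with prescribed values on a₀ b₀
  have hψex : ∀ e, ∃ ψ : Fin p ≃ {x // x ∈ gadgetSe P p e},
      (ψ a₀).1 = Sum.inl (u e) ∧ (ψ b₀).1 = Sum.inl (v e) := by
    intro e
    set base := (Fintype.equivFinOfCardEq (cardcoe e)).symm with hbase
    set U : {x // x ∈ gadgetSe P p e} := ⟨Sum.inl (u e), hmemu e⟩ with hU
    set W : {x // x ∈ gadgetSe P p e} := ⟨Sum.inl (v e), hmemv e⟩ with hW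
    set ψ₁ := base.trans (Equiv.swap (base a₀) U) with hψ₁
    have h1 : ψ₁ a₀ = U := by
      simp [hψ₁, Equiv.trans_apply, Equiv.swap_apply_left]
    have hUW : U ≠ W := by
      intro hcon
      have := congrArg Subtype.val hcon
      simp only [hU, hW] at this
      exact (hPuv e).ne (Sum.inl_injective this)
    have hUb : U ≠ ψ₁ b₀ := by
      intro hcon
      have := ψ₁.injective (h1.trans hcon)
      exact hab.ne this
    refine ⟨ψ₁.trans (Equiv.swap (ψ₁ b₀) W), ?_, ?_⟩
    · rw [Equiv.trans_apply, h1, Equiv.swap_apply_of_ne_of_ne hUb hUW]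
    · rw [Equiv.trans_apply, Equiv.swap_apply_left]
  choose ψ hψa hψb using hψex
  have finj : ∀ e, Function.Injective (fun a : Fin p => ((ψ e) a).1) := fun e =>
    Subtype.val_injective.comp (ψ e).injective
  -- the overlaying graph
  set E' : Set (Sym2 (V ⊕ (↥P.edgeFinset × Fin (p - 2)))) :=
    (Sym2.map Sum.inl '' G.edgeSet) ∪
      ⋃ e : ↥P.edgeFinset, (Sym2.map (fun a => ((ψ e) a).1)) '' F₀.edgeSet with hE'
  refine ⟨SimpleGraph.fromEdgeSet E', ?_, ?_⟩
  · -- Overlays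
    have adj1 : ∀ x y, G.Adj x y →
        (SimpleGraph.fromEdgeSet E').Adj (Sum.inl x) (Sum.inl y) := by
      intro x y h
      rw [SimpleGraph.fromEdgeSet_adj]
      exact ⟨Or.inl ⟨s(x, y), h, Sym2.map_pair_eq _ _ _⟩,
        fun hxy => h.ne (Sum.inl_injective hxy)⟩
    have adj2 : ∀ e a b, F₀.Adj a b →
        (SimpleGraph.fromEdgeSet E').Adj ((ψ e) a).1 ((ψ e) b).1 := by
      intro e a b h
      rw [SimpleGraph.fromEdgeSet_adj]
      constructor
      · right
        exact Set.mem_iUnion.mpr ⟨e, ⟨s(a, b), h, Sym2.map_pair_eq _ _ _⟩⟩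
      · intro hcon
        exact h.ne (finj e hcon)
    intro S' hS'
    rw [gadgetH, Finset.mem_union] at hS'
    rcases hS' with h | h
    · obtain ⟨S₀, hS₀, rfl⟩ := Finset.mem_image.mp h
      obtain ⟨A, hA, φ, hφ⟩ := hG S₀ hS₀
      exact overlays_cast _ _ (Finset.card_image_of_injective S₀ Sum.inl_injective) A hA
        (φ.trans (finsetImageEquiv Sum.inl Sum.inl_injective S₀))
        (fun a b hab' => adj1 _ _ (hφ a b hab'))
    · obtain ⟨e, -, rfl⟩ := Finset.mem_image.mp h
      exact overlays_cast _ _ (cardSe e) F₀ hF₀ (ψ e) (fun a b hab' => adj2 e a b hab')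
  · -- edge count
    set T' : Finset (Sym2 (V ⊕ (↥P.edgeFinset × Fin (p - 2)))) :=
      (G.edgeFinset.image (Sym2.map Sum.inl)) ∪
        Finset.univ.biUnion (fun e : ↥P.edgeFinset =>
          ((F₀.edgeFinset.image (Sym2.map (fun a => ((ψ e) a).1))).erase
            (Sym2.map Sum.inl (e.1 : Sym2 V)))) with hT'
    have hsub : (SimpleGraph.fromEdgeSet E').edgeSet ⊆ ↑T' := by
      rw [SimpleGraph.edgeSet_fromEdgeSet]
      rintro x ⟨hx1, -⟩
      rcases hx1 with hx1 | hx1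
      · obtain ⟨s, hs, rfl⟩ := hx1
        apply Finset.mem_coe.mpr
        exact Finset.mem_union_left _
          (Finset.mem_image.mpr ⟨s, SimpleGraph.mem_edgeFinset.mpr hs, rfl⟩)
      · rw [Set.mem_iUnion] at hx1
        obtain ⟨e, hx1⟩ := hx1
        obtain ⟨s, hs, rfl⟩ := hx1
        apply Finset.mem_coe.mpr
        by_cases hcase : Sym2.map (fun a => ((ψ e) a).1) s = Sym2.map Sum.inl (e.1 : Sym2 V)
        · rw [hcase]
          apply Finset.mem_union_left
          refine Finset.mem_image.mpr ⟨e.1, ?_, rfl⟩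
          rw [SimpleGraph.mem_edgeFinset, huv e]
          exact (SimpleGraph.mem_edgeSet _).mpr (hPG (hPuv e))
        · apply Finset.mem_union_right
          exact Finset.mem_biUnion.mpr ⟨e, Finset.mem_univ e, Finset.mem_erase.mpr
            ⟨hcase, Finset.mem_image.mpr ⟨s, SimpleGraph.mem_edgeFinset.mpr hs, rfl⟩⟩⟩
    have hmem_im : ∀ e, Sym2.map Sum.inl (e.1 : Sym2 V) ∈
        F₀.edgeFinset.image (Sym2.map (fun a => ((ψ e) a).1)) := by
      intro e
      refine Finset.mem_image.mpr ⟨s(a₀, b₀), SimpleGraph.mem_edgeFinset.mpr hab, ?_⟩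
      rw [Sym2.map_pair_eq, hψa e, hψb e, huv e, Sym2.map_pair_eq]
    have hcount : T'.card ≤ G.edgeFinset.card + P.edgeFinset.card * (F₀.edgeFinset.card - 1) := by
      have h1 : (G.edgeFinset.image (Sym2.map Sum.inl)).card = G.edgeFinset.card :=
        Finset.card_image_of_injective _ (Sym2.map.injective (Sum.inl_injective : Function.Injective (Sum.inl : V → V ⊕ (↥P.edgeFinset × Fin (p - 2)))))
      have h2 : ∀ e : ↥P.edgeFinset,
          ((F₀.edgeFinset.image (Sym2.map (fun a => ((ψ e) a).1))).erase
            (Sym2.map Sum.inl (e.1 : Sym2 V))).card = F₀.edgeFinset.card - 1 := by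
        intro e
        rw [Finset.card_erase_of_mem (hmem_im e),
          Finset.card_image_of_injective _ (Sym2.map.injective (finj e))]
      calc T'.card ≤ (G.edgeFinset.image (Sym2.map Sum.inl)).card +
            (Finset.univ.biUnion (fun e : ↥P.edgeFinset =>
              ((F₀.edgeFinset.image (Sym2.map (fun a => ((ψ e) a).1))).erase
                (Sym2.map Sum.inl (e.1 : Sym2 V))))).card := Finset.card_union_le _ _
        _ ≤ G.edgeFinset.card + ∑ e : ↥P.edgeFinset,
            ((F₀.edgeFinset.image (Sym2.map (fun a => ((ψ e) a).1))).erase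
              (Sym2.map Sum.inl (e.1 : Sym2 V))).card := by
            rw [h1]
            exact Nat.add_le_add_left Finset.card_biUnion_le _
        _ = G.edgeFinset.card + P.edgeFinset.card * (F₀.edgeFinset.card - 1) := by
            rw [Finset.sum_congr rfl (fun e _ => h2 e), Finset.sum_const, smul_eq_mul,
              Finset.card_univ, Fintype.card_coe]
    have hfin : ((↑T' : Set (Sym2 (V ⊕ (↥P.edgeFinset × Fin (p - 2)))))).Finite :=
      T'.finite_toSet
    calc (SimpleGraph.fromEdgeSet E').edgeSet.ncard
        ≤ (↑T' : Set (Sym2 (V ⊕ (↥P.edgeFinset × Fin (p - 2))))).ncard :=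
          Set.ncard_le_ncard hsub hfin
      _ = T'.card := Set.ncard_coe_finset T'
      _ ≤ G.edgeFinset.card + P.edgeFinset.card * (F₀.edgeFinset.card - 1) := hcount
      _ = G.edgeSet.ncard + P.edgeSet.ncard * (F₀.edgeSet.ncard - 1) := by
          rw [ncard_edgeSet_eq G, ncard_edgeSet_eq P, ncard_edgeSet_eq F₀]

lemma gadget_lower (F : ∀ n, Set (SimpleGraph (Fin n)))
    (F₀ : SimpleGraph (Fin p)) (hF₀ : F₀ ∈ F p) (hF₀ne : F₀ ≠ ⊥)
    (hmin : ∀ A ∈ F p, F₀.edgeSet.ncard ≤ A.edgeSet.ncard)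
    (H : Finset (Finset V)) (P : SimpleGraph V) [DecidableRel P.Adj]
    (G' : SimpleGraph (V ⊕ (↥P.edgeFinset × Fin (p - 2))))
    (hG' : Overlays F G' (gadgetH P p H)) :
    ∃ G : SimpleGraph V, Overlays F G H ∧ P ≤ G ∧
      G.edgeSet.ncard + P.edgeSet.ncard * (F₀.edgeSet.ncard - 1) ≤ G'.edgeSet.ncard := by
  classical
  have hne : F₀.edgeSet.Nonempty := SimpleGraph.edgeSet_nonempty.mpr hF₀ne
  obtain ⟨q₀, hq₀⟩ := hne
  have hab : ∃ a b : Fin p, F₀.Adj a b := by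
    revert hq₀
    induction q₀ using Sym2.ind with
    | _ a b => exact fun hq => ⟨a, b, (SimpleGraph.mem_edgeSet _).mp hq⟩
  obtain ⟨a₀, b₀, hab⟩ := hab
  have hp : 2 ≤ p := by
    have h1 : (a₀ : ℕ) < p := a₀.2
    have h2 : (b₀ : ℕ) < p := b₀.2
    have h3 : (a₀ : ℕ) ≠ (b₀ : ℕ) := fun h => hab.ne (Fin.ext h)
    omega
  choose u v hPuv huv hfil using fun e => gadget_rep P e
  have hinjr : ∀ e : ↥P.edgeFinset,
      Function.Injective (fun i : Fin (p - 2) =>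
        (Sum.inr (e, i) : V ⊕ (↥P.edgeFinset × Fin (p - 2)))) := by
    intro e i j h
    simpa using h
  have cardSe : ∀ e, (gadgetSe P p e).card = p := by
    intro e
    have hdis : Disjoint
        ((Finset.univ.filter (fun x => x ∈ (e.1 : Sym2 V))).image
          (Sum.inl : V → V ⊕ (↥P.edgeFinset × Fin (p - 2))))
        (Finset.univ.image (fun i : Fin (p - 2) =>
          (Sum.inr (e, i) : V ⊕ (↥P.edgeFinset × Fin (p - 2))))) := by
      rw [Finset.disjoint_left]
      rintro a ha hb
      obtain ⟨x, -, rfl⟩ := Finset.mem_image.mp ha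
      obtain ⟨i, -, hi⟩ := Finset.mem_image.mp hb
      exact absurd hi (by simp)
    rw [gadgetSe, Finset.card_union_of_disjoint hdis,
      Finset.card_image_of_injective _ Sum.inl_injective, hfil e,
      Finset.card_image_of_injective _ (hinjr e), Finset.card_univ, Fintype.card_fin]
    have hcard2 : ({u e, v e} : Finset V).card = 2 := by
      rw [Finset.card_insert_of_notMem (by simp [(hPuv e).ne]), Finset.card_singleton]
    rw [hcard2]
    omega
  set Gv := SimpleGraph.comap (Sum.inl : V → V ⊕ (↥P.edgeFinset × Fin (p - 2))) G' with hGv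
  refine ⟨Gv ⊔ P, ?_, le_sup_right, ?_⟩
  · -- Overlays
    intro S₀ hS₀
    have hmem : S₀.image Sum.inl ∈ gadgetH P p H :=
      Finset.mem_union_left _ (Finset.mem_image_of_mem _ hS₀)
    obtain ⟨A, hA, φ, hφ⟩ := hG' _ hmem
    refine overlays_cast _ S₀ (Finset.card_image_of_injective S₀ Sum.inl_injective).symm A hA
      (φ.trans (finsetImageEquiv Sum.inl Sum.inl_injective S₀).symm) ?_
    intro a b h
    have h2 := hφ a b h
    apply SimpleGraph.sup_adj _ _ _ _ |>.mpr
    left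
    rw [hGv, SimpleGraph.comap_adj]
    simp only [Equiv.trans_apply]
    rw [finsetImageEquiv_symm_apply Sum.inl Sum.inl_injective S₀ (φ a),
      finsetImageEquiv_symm_apply Sum.inl Sum.inl_injective S₀ (φ b)]
    exact h2
  · -- counting
    set c' := F₀.edgeFinset.card with hc'
    have hc'pos : 1 ≤ c' := Finset.card_pos.mpr ⟨s(a₀, b₀), SimpleGraph.mem_edgeFinset.mpr hab⟩
    have hSe : ∀ e : ↥P.edgeFinset, gadgetSe P p e ∈ gadgetH P p H := fun e =>
      Finset.mem_union_right _ (Finset.mem_image_of_mem _ (Finset.mem_attach _ e))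
    choose A hA φ hφ using fun e => hG' _ (hSe e)
    have hcA : ∀ e, c' ≤ (A e).edgeFinset.card := by
      intro e
      have hmin' : ∀ (n : ℕ) (_ : n = p) (B : SimpleGraph (Fin n)), B ∈ F n →
          F₀.edgeSet.ncard ≤ B.edgeSet.ncard := by
        rintro n rfl B hB
        exact hmin B hB
      have := hmin' _ (cardSe e) (A e) (hA e)
      rwa [ncard_edgeSet_eq F₀, ncard_edgeSet_eq (A e)] at this
    set ι : ↥P.edgeFinset → Sym2 (V ⊕ (↥P.edgeFinset × Fin (p - 2))) :=
      fun e => Sym2.map Sum.inl (e.1 : Sym2 V) with hι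
    set C : ↥P.edgeFinset → Finset (Sym2 (V ⊕ (↥P.edgeFinset × Fin (p - 2)))) :=
      fun e => (A e).edgeFinset.image (Sym2.map (fun a => ((φ e) a).1)) with hC
    have hCsub : ∀ e, C e ⊆ G'.edgeFinset := by
      intro e x hx
      obtain ⟨s, hs, rfl⟩ := Finset.mem_image.mp hx
      rw [SimpleGraph.mem_edgeFinset] at hs ⊢
      revert hs
      induction s using Sym2.ind with
      | _ a b =>
        intro hs
        rw [Sym2.map_pair_eq]
        exact (SimpleGraph.mem_edgeSet _).mpr (hφ e a b ((SimpleGraph.mem_edgeSet _).mp hs))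
    have hCmem : ∀ e, ∀ x ∈ C e, ∀ w ∈ x, w ∈ gadgetSe P p e := by
      intro e x hx w hw
      obtain ⟨s, hs, rfl⟩ := Finset.mem_image.mp hx
      obtain ⟨a, ha, rfl⟩ := Sym2.mem_map.mp hw
      exact ((φ e) a).2
    have hCcard : ∀ e, (C e).card = (A e).edgeFinset.card := fun e =>
      Finset.card_image_of_injective _
        (Sym2.map.injective (Subtype.val_injective.comp (φ e).injective))
    have hCform : ∀ e x, x ∈ C e → ∃ w₁ w₂, x = s(w₁, w₂) ∧ w₁ ≠ w₂ ∧
        w₁ ∈ gadgetSe P p e ∧ w₂ ∈ gadgetSe P p e := by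
      intro e x hx
      obtain ⟨s, hs, rfl⟩ := Finset.mem_image.mp hx
      rw [SimpleGraph.mem_edgeFinset] at hs
      revert hs
      induction s using Sym2.ind with
      | _ a b =>
        intro hs
        rw [SimpleGraph.mem_edgeSet] at hs
        rw [Sym2.map_pair_eq]
        exact ⟨_, _, rfl,
          fun hcon => hs.ne ((φ e).injective (Subtype.val_injective hcon)),
          ((φ e) a).2, ((φ e) b).2⟩
    set D : ↥P.edgeFinset → Finset (Sym2 (V ⊕ (↥P.edgeFinset × Fin (p - 2)))) :=
      fun e => G'.edgeFinset.filter (fun x =>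
        (∃ w ∈ x, ∃ i, w = Sum.inr (e, i)) ∧ ∀ w ∈ x, w ∈ gadgetSe P p e) with hD
    set B : Finset (Sym2 (V ⊕ (↥P.edgeFinset × Fin (p - 2)))) :=
      G'.edgeFinset.filter (fun x => ∀ w ∈ x, ∃ z, w = Sum.inl z) with hB
    have hinr : ∀ (e e' : ↥P.edgeFinset) (i : Fin (p - 2)),
        (Sum.inr (e, i) : V ⊕ (↥P.edgeFinset × Fin (p - 2))) ∈ gadgetSe P p e' → e = e' := by
      intro e e' i h
      rw [gadgetSe, Finset.mem_union] at h
      rcases h with h | h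
      · obtain ⟨x, -, hx⟩ := Finset.mem_image.mp h
        exact absurd hx (by simp)
      · obtain ⟨j, -, hj⟩ := Finset.mem_image.mp h
        have := (Sum.inr_injective hj : (e', j) = (e, i))
        exact (Prod.ext_iff.mp this).1.symm
    have hmemuS : ∀ e, (Sum.inl (u e) : V ⊕ (↥P.edgeFinset × Fin (p - 2))) ∈ gadgetSe P p e :=
      fun e => Finset.mem_union_left _ (Finset.mem_image_of_mem _ (by simp [hfil e]))
    have hCD : ∀ e, (C e).erase (ι e) ⊆ D e := by
      intro e x hx
      obtain ⟨hxne, hxC⟩ := Finset.mem_erase.mp hx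
      refine Finset.mem_filter.mpr ⟨hCsub e hxC, ?_, hCmem e x hxC⟩
      by_contra hcon
      push_neg at hcon
      obtain ⟨w₁, w₂, rfl, hww, hw1, hw2⟩ := hCform e x hxC
      have hall : ∀ w, w ∈ gadgetSe P p e → (∀ i : Fin (p - 2), w ≠ Sum.inr (e, i)) →
          w = Sum.inl (u e) ∨ w = Sum.inl (v e) := by
        intro w hwS hni
        rw [gadgetSe, Finset.mem_union] at hwS
        rcases hwS with h1 | h1
        · rw [hfil e] at h1
          obtain ⟨z, hz, rfl⟩ := Finset.mem_image.mp h1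
          rcases Finset.mem_insert.mp hz with rfl | hz
          · exact Or.inl rfl
          · exact Or.inr (by rw [Finset.mem_singleton.mp hz])
        · obtain ⟨i, -, rfl⟩ := Finset.mem_image.mp h1
          exact absurd rfl (hni i)
      have hni1 : ∀ i : Fin (p - 2), w₁ ≠ Sum.inr (e, i) := by
        intro i hcon1
        exact hcon w₁ (by rw [Sym2.mem_iff]; exact Or.inl rfl) i hcon1
      have hni2 : ∀ i : Fin (p - 2), w₂ ≠ Sum.inr (e, i) := by
        intro i hcon2
        exact hcon w₂ (by rw [Sym2.mem_iff]; exact Or.inr rfl) i hcon2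
      have hι_eq : ι e = s(Sum.inl (u e), Sum.inl (v e)) := by
        show Sym2.map Sum.inl (e.1 : Sym2 V) = _
        rw [huv e, Sym2.map_pair_eq]
      rcases hall w₁ hw1 hni1 with rfl | rfl <;> rcases hall w₂ hw2 hni2 with rfl | rfl
      · exact hww rfl
      · exact hxne (by rw [hι_eq])
      · exact hxne (by rw [hι_eq, Sym2.eq_swap])
      · exact hww rfl
    have hDcard : ∀ e, c' - 1 + (if ι e ∈ G'.edgeFinset then 0 else 1) ≤ (D e).card := by
      intro e
      have h1 : ((C e).erase (ι e)).card ≤ (D e).card := Finset.card_le_card (hCD e)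
      have h2 : (C e).card - 1 ≤ ((C e).erase (ι e)).card := Finset.pred_card_le_card_erase
      have h3 : c' ≤ (C e).card := by rw [hCcard e]; exact hcA e
      by_cases hιmem : ι e ∈ G'.edgeFinset
      · simp only [hιmem, if_true]
        omega
      · simp only [hιmem, if_false]
        have heq : (C e).erase (ι e) = C e :=
          Finset.erase_eq_of_notMem (fun hmem => hιmem (hCsub e hmem))
        rw [heq] at h1
        omega
    have hBD : ∀ e, Disjoint B (D e) := by
      intro e
      rw [Finset.disjoint_left]
      intro x hxB hxD
      obtain ⟨-, ⟨w, hw, i, rfl⟩, -⟩ := Finset.mem_filter.mp hxD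
      obtain ⟨-, hB2⟩ := Finset.mem_filter.mp hxB
      obtain ⟨z, hz⟩ := hB2 _ hw
      exact absurd hz (by simp)
    have hDD : ∀ e e', e ≠ e' → Disjoint (D e) (D e') := by
      intro e e' hne'
      rw [Finset.disjoint_left]
      intro x hx hx'
      obtain ⟨-, ⟨w, hw, i, rfl⟩, -⟩ := Finset.mem_filter.mp hx
      obtain ⟨-, -, h2⟩ := Finset.mem_filter.mp hx'
      exact hne' (hinr e e' i (h2 _ hw))
    have hBsub : Gv.edgeFinset.image (Sym2.map Sum.inl) ⊆ B := by
      intro x hx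
      obtain ⟨s, hs, rfl⟩ := Finset.mem_image.mp hx
      rw [SimpleGraph.mem_edgeFinset] at hs
      revert hs
      induction s using Sym2.ind with
      | _ a b =>
        intro hs
        rw [Sym2.map_pair_eq]
        refine Finset.mem_filter.mpr ⟨?_, ?_⟩
        · rw [SimpleGraph.mem_edgeFinset, SimpleGraph.mem_edgeSet]
          exact (SimpleGraph.mem_edgeSet _).mp hs
        · intro w hw
          rw [Sym2.mem_iff] at hw
          rcases hw with rfl | rfl
          exacts [⟨a, rfl⟩, ⟨b, rfl⟩]
    have hBcard : Gv.edgeFinset.card ≤ B.card := by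
      rw [← Finset.card_image_of_injective Gv.edgeFinset (Sym2.map.injective (Sum.inl_injective : Function.Injective (Sum.inl : V → V ⊕ (↥P.edgeFinset × Fin (p - 2)))))]
      exact Finset.card_le_card hBsub
    have hGsub : (Gv ⊔ P).edgeFinset ⊆ Gv.edgeFinset ∪
        (P.edgeFinset.filter (fun q => Sym2.map Sum.inl q ∉ G'.edgeFinset)) := by
      intro q hq
      rw [SimpleGraph.mem_edgeFinset, SimpleGraph.edgeSet_sup] at hq
      rcases hq with hq | hq
      · exact Finset.mem_union_left _ (SimpleGraph.mem_edgeFinset.mpr hq)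
      · by_cases h2 : q ∈ Gv.edgeSet
        · exact Finset.mem_union_left _ (SimpleGraph.mem_edgeFinset.mpr h2)
        · refine Finset.mem_union_right _
            (Finset.mem_filter.mpr ⟨SimpleGraph.mem_edgeFinset.mpr hq, ?_⟩)
          intro hcon
          apply h2
          revert hq hcon
          induction q using Sym2.ind with
          | _ a b =>
            intro hq hcon
            rw [SimpleGraph.mem_edgeFinset, Sym2.map_pair_eq, SimpleGraph.mem_edgeSet] at hcon
            exact (SimpleGraph.mem_edgeSet _).mpr hcon
    have hNcount : (P.edgeFinset.filter (fun q => Sym2.map Sum.inl q ∉ G'.edgeFinset)).card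
        = (Finset.univ.filter (fun e : ↥P.edgeFinset => ι e ∉ G'.edgeFinset)).card := by
      rw [Finset.card_filter, Finset.card_filter, Finset.univ_eq_attach,
        ← Finset.sum_attach P.edgeFinset
          (fun q => if Sym2.map Sum.inl q ∉ G'.edgeFinset then 1 else 0)]
    have hkey : B.card + ∑ e : ↥P.edgeFinset, (D e).card ≤ G'.edgeFinset.card := by
      have hdisj : ∀ x ∈ (Finset.univ : Finset ↥P.edgeFinset), ∀ y ∈ Finset.univ, x ≠ y →
          Disjoint (D x) (D y) := fun x _ y _ h => hDD x y h
      calc B.card + ∑ e : ↥P.edgeFinset, (D e).card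
          = B.card + (Finset.univ.biUnion D).card := by rw [Finset.card_biUnion hdisj]
        _ = (B ∪ Finset.univ.biUnion D).card := by
            rw [Finset.card_union_of_disjoint
              ((Finset.disjoint_biUnion_right _ _ _).mpr (fun e _ => hBD e))]
        _ ≤ G'.edgeFinset.card := Finset.card_le_card
            (Finset.union_subset (Finset.filter_subset _ _)
              (Finset.biUnion_subset.mpr (fun e _ => Finset.filter_subset _ _)))
    have hsum : (Finset.univ : Finset (↥P.edgeFinset)).card * (c' - 1) +
        (Finset.univ.filter (fun e : ↥P.edgeFinset => ι e ∉ G'.edgeFinset)).card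
        ≤ ∑ e : ↥P.edgeFinset, (D e).card := by
      calc (Finset.univ : Finset (↥P.edgeFinset)).card * (c' - 1) +
          (Finset.univ.filter (fun e : ↥P.edgeFinset => ι e ∉ G'.edgeFinset)).card
          = ∑ e : ↥P.edgeFinset, ((c' - 1) + if ι e ∈ G'.edgeFinset then 0 else 1) := by
            rw [Finset.sum_add_distrib, Finset.sum_const, smul_eq_mul, Finset.card_filter]
            congr 1
            apply Finset.sum_congr rfl
            intro x _
            by_cases h : ι x ∈ G'.edgeFinset <;> simp [h]
        _ ≤ ∑ e : ↥P.edgeFinset, (D e).card := Finset.sum_le_sum (fun e _ => hDcard e)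
    have huniv : (Finset.univ : Finset ↥P.edgeFinset).card = P.edgeFinset.card := by
      rw [Finset.card_univ, Fintype.card_coe]
    have hGcard : (Gv ⊔ P).edgeFinset.card ≤ Gv.edgeFinset.card +
        (P.edgeFinset.filter (fun q => Sym2.map Sum.inl q ∉ G'.edgeFinset)).card :=
      le_trans (Finset.card_le_card hGsub) (Finset.card_union_le _ _)
    rw [ncard_edgeSet_eq (Gv ⊔ P), ncard_edgeSet_eq P, ncard_edgeSet_eq F₀,
      ncard_edgeSet_eq G']
    rw [huniv, hc'] at hsum
    rw [hNcount] at hGcard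
    omega

end Main

/-- let `F` be a family of graphs all on `p` vertices, `F₀ ∈ F` nonempty with
the minimum number of edges, and `P` a prescribed edge set on `V(H)`. Construct `H'` from `H`
by adding, for each prescribed edge `e = u_e v_e`, a set `X_e` of `p-2` new vertices and the
new hyperedge `S_e = X_e ∪ {u_e, v_e}`. Then
`ov_F(H') = ov_F(H; P) + |E(P)|·(|E(F₀)| − 1)`. -/
theorem ovNumber_prescribed_reduction (p : ℕ) (F : ∀ n, Set (SimpleGraph (Fin n)))
    (honly : ∀ n, n ≠ p → F n = ∅)
    (F₀ : SimpleGraph (Fin p)) (hF₀ : F₀ ∈ F p) (hF₀ne : F₀ ≠ ⊥)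
    (hmin : ∀ A ∈ F p, F₀.edgeSet.ncard ≤ A.edgeSet.ncard)
    {V : Type} [Fintype V] [DecidableEq V] (H : Finset (Finset V))
    (P : SimpleGraph V) [DecidableRel P.Adj]
    (hex : ∃ G : SimpleGraph V, Overlays F G H ∧ P ≤ G) :
    ovNumber F
      ((H.image (Finset.image (Sum.inl : V → V ⊕ (↥P.edgeFinset × Fin (p - 2))))) ∪
        P.edgeFinset.attach.image (fun e =>
          ((Finset.univ.filter (fun x => x ∈ (e.1 : Sym2 V))).image
              (Sum.inl : V → V ⊕ (↥P.edgeFinset × Fin (p - 2)))) ∪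
            (Finset.univ.image (fun i : Fin (p - 2) =>
              (Sum.inr (e, i) : V ⊕ (↥P.edgeFinset × Fin (p - 2)))))))
      = ovNumberPre F H P + (P.edgeSet.ncard * (F₀.edgeSet.ncard - 1) : ℕ) := by
  classical
  show ovNumber F (gadgetH P p H) = ovNumberPre F H P +
    ((P.edgeSet.ncard * (F₀.edgeSet.ncard - 1) : ℕ) : ℕ∞)
  set m : ℕ := P.edgeSet.ncard * (F₀.edgeSet.ncard - 1) with hm
  obtain ⟨G₀, hG₀, hPG₀⟩ := hex
  have hne1 : {k : ℕ∞ | ∃ G : SimpleGraph V, Overlays F G H ∧ P ≤ G ∧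
      (G.edgeSet.ncard : ℕ∞) = k}.Nonempty := ⟨_, G₀, hG₀, hPG₀, rfl⟩
  obtain ⟨G₁, hG₁, hPG₁, hcard₁⟩ := csInf_mem hne1
  obtain ⟨G₁', hO₁', hle₁'⟩ := gadget_upper F F₀ hF₀ hF₀ne H P G₁ hG₁ hPG₁
  have hne2 : {k : ℕ∞ | ∃ G' : SimpleGraph (V ⊕ (↥P.edgeFinset × Fin (p - 2))),
      Overlays F G' (gadgetH P p H) ∧ (G'.edgeSet.ncard : ℕ∞) = k}.Nonempty :=
    ⟨_, G₁', hO₁', rfl⟩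
  obtain ⟨G₂', hO₂', hcard₂⟩ := csInf_mem hne2
  obtain ⟨G₂, hG₂, hPG₂, hle₂⟩ := gadget_lower F F₀ hF₀ hF₀ne hmin H P G₂' hO₂'
  apply le_antisymm
  · have h1 : ovNumber F (gadgetH P p H) ≤ (G₁'.edgeSet.ncard : ℕ∞) :=
      sInf_le ⟨G₁', hO₁', rfl⟩
    refine h1.trans ?_
    have h2 : ovNumberPre F H P = (G₁.edgeSet.ncard : ℕ∞) := hcard₁.symm
    rw [h2]
    exact_mod_cast hle₁'
  · have h2 : ovNumberPre F H P ≤ (G₂.edgeSet.ncard : ℕ∞) :=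
      sInf_le ⟨G₂, hG₂, hPG₂, rfl⟩
    have h3 : ovNumberPre F H P + (m : ℕ∞) ≤ ((G₂.edgeSet.ncard + m : ℕ) : ℕ∞) := by
      push_cast
      exact add_le_add_left h2 _
    refine h3.trans ?_
    have h4 : ovNumber F (gadgetH P p H) = (G₂'.edgeSet.ncard : ℕ∞) := hcard₂.symm
    rw [h4]
    exact_mod_cast hle₂
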